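/- Let W ≥ 1 be a real number, let p be a prime, and let A be a multiset in F_p^d such that no affine hyperplane of F_p^d contains more than |A|/(4W) elements of A (counted with multiplicity). Then for every subset Y of F_p^d with |Y| ≤ p^d/2 and every a' ∈ A, there exists a ∈ A with |(a + Y) \ (a' + Y)| ≥ (W/(16p))|Y|. -/

import Mathlib

open Finset

variable {p d : ℕ}

private abbrev Gp (p d : ℕ) := Fin d → ZMod p

private def trs (z : Gp p d) (Y : Finset (Gp p d)) : Finset (Gp p d) := Y.image (z + ·)

private lemma mem_trs {z x : Gp p d} {Y : Finset (Gp p d)} : x ∈ trs z Y ↔ x - z ∈ Y := by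
  simp only [trs, mem_image]
  constructor
  · rintro ⟨y, hy, rfl⟩; simpa using hy
  · intro h; exact ⟨x - z, h, by ring⟩

private lemma card_trs (z : Gp p d) (Y : Finset (Gp p d)) : (trs z Y).card = Y.card :=
  Finset.card_image_of_injective _ (add_right_injective z)

private lemma trs_trs (z w : Gp p d) (Y : Finset (Gp p d)) :
    trs z (trs w Y) = trs (z + w) Y := by
  ext x
  rw [mem_trs, mem_trs, mem_trs, sub_sub]

private def fv (Y : Finset (Gp p d)) (z : Gp p d) : ℕ := ((trs z Y) \ Y).card

private def Nv (Y : Finset (Gp p d)) (z : Gp p d) : ℕ := (Y ∩ trs z Y).card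

private lemma Nv_add_fv (Y : Finset (Gp p d)) (z : Gp p d) : Nv Y z + fv Y z = Y.card := by
  have h := Finset.card_inter_add_card_sdiff (trs z Y) Y
  rw [Finset.inter_comm] at h
  rw [Nv, fv, h, card_trs]

private lemma fv_zero (Y : Finset (Gp p d)) : fv Y 0 = 0 := by
  have : trs 0 Y = Y := by ext x; simp [mem_trs]
  simp [fv, this]

private lemma trs_sdiff (z : Gp p d) (S T : Finset (Gp p d)) :
    trs z (S \ T) = trs z S \ trs z T := by
  ext x
  simp only [mem_trs, Finset.mem_sdiff]

private lemma fv_neg (Y : Finset (Gp p d)) (z : Gp p d) : fv Y (-z) = fv Y z := by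
  have h1 : trs z (trs (-z) Y \ Y) = Y \ trs z Y := by
    rw [trs_sdiff, trs_trs]
    congr 1
    · ext x; rw [mem_trs]; simp
  have h2 : (trs z (trs (-z) Y \ Y)).card = (trs (-z) Y \ Y).card :=
    Finset.card_image_of_injective _ (add_right_injective z)
  have e1 := Finset.card_inter_add_card_sdiff Y (trs z Y)
  have e2 := Finset.card_inter_add_card_sdiff (trs z Y) Y
  rw [Finset.inter_comm] at e2
  have e3 : (trs z Y).card = Y.card := card_trs z Y
  rw [h1] at h2
  unfold fv
  omega

private lemma fv_add_le (Y : Finset (Gp p d)) (z w : Gp p d) :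
    fv Y (z + w) ≤ fv Y w + fv Y z := by
  have hsub : trs (z + w) Y \ Y ⊆ (trs (z + w) Y \ trs w Y) ∪ (trs w Y \ Y) := by
    intro x hx
    rw [Finset.mem_sdiff] at hx
    by_cases hx2 : x ∈ trs w Y
    · exact Finset.mem_union_right _ (Finset.mem_sdiff.2 ⟨hx2, hx.2⟩)
    · exact Finset.mem_union_left _ (Finset.mem_sdiff.2 ⟨hx.1, hx2⟩)
  calc fv Y (z + w) ≤ ((trs (z + w) Y \ trs w Y) ∪ (trs w Y \ Y)).card :=
        Finset.card_le_card hsub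
    _ ≤ (trs (z + w) Y \ trs w Y).card + (trs w Y \ Y).card := Finset.card_union_le _ _
    _ = fv Y z + fv Y w := by
        congr 1
        have : trs (z + w) Y \ trs w Y = trs w (trs z Y \ Y) := by
          rw [trs_sdiff, trs_trs]
          congr 2
          abel
        rw [this]
        exact Finset.card_image_of_injective _ (add_right_injective w)
    _ = fv Y w + fv Y z := by ring

private lemma fv_sub_le (Y : Finset (Gp p d)) (z w : Gp p d) :
    fv Y (z - w) ≤ fv Y z + fv Y w := by
  have := fv_add_le Y z (-w)
  rw [fv_neg] at this
  calc fv Y (z - w) = fv Y (z + -w) := by rw [sub_eq_add_neg]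
    _ ≤ fv Y (-w) + fv Y z := fv_add_le Y z (-w)
    _ = fv Y z + fv Y w := by rw [fv_neg]; ring

private lemma fv_nsmul_le (Y : Finset (Gp p d)) (z : Gp p d) (k : ℕ) :
    fv Y (k • z) ≤ k * fv Y z := by
  induction k with
  | zero => simp [fv_zero]
  | succ n ih =>
      have : (n + 1) • z = n • z + z := by rw [add_smul, one_smul]
      rw [this]
      calc fv Y (n • z + z) ≤ fv Y z + fv Y (n • z) := fv_add_le Y (n • z) z
        _ ≤ fv Y z + n * fv Y z := by omega
        _ = (n + 1) * fv Y z := by ring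

variable [NeZero p]

private def Fc (Y : Finset (Gp p d)) (K : ℕ) (a x : Gp p d) : ℕ :=
  ((Finset.range K).filter (fun j => x - j • a ∈ Y)).card

private lemma inter_trs_card (Y : Finset (Gp p d)) (u v : Gp p d) :
    (trs u Y ∩ trs v Y).card = Nv Y (u - v) := by
  have h : trs u Y ∩ trs v Y = trs v (trs (u - v) Y ∩ Y) := by
    ext x
    simp only [Finset.mem_inter, mem_trs, sub_sub]
    have he : v + (u - v) = u := by abel
    rw [he]
  rw [h]
  rw [show trs v (trs (u - v) Y ∩ Y) = (trs (u-v) Y ∩ Y).image (v + ·) from rfl]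
  rw [Finset.card_image_of_injective _ (add_right_injective v), Finset.inter_comm, Nv]

private lemma filter_pair_card (Y : Finset (Gp p d)) (u v : Gp p d) :
    (Finset.univ.filter (fun x : Gp p d => x - u ∈ Y ∧ x - v ∈ Y)).card = Nv Y (u - v) := by
  rw [← inter_trs_card]
  congr 1
  ext x
  simp [mem_trs]

private lemma sum_Fc_sq (Y : Finset (Gp p d)) (K : ℕ) (a : Gp p d) :
    ∑ x : Gp p d, (Fc Y K a x) ^ 2
      = ∑ j ∈ Finset.range K, ∑ l ∈ Finset.range K, Nv Y (j • a - l • a) := by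
  have hF : ∀ x, Fc Y K a x = ∑ j ∈ Finset.range K, if x - j • a ∈ Y then 1 else 0 := by
    intro x; rw [Fc, Finset.card_filter]
  calc ∑ x : Gp p d, (Fc Y K a x)^2
      = ∑ x : Gp p d, ∑ j ∈ Finset.range K, ∑ l ∈ Finset.range K,
          ((if x - j • a ∈ Y then 1 else 0) * (if x - l • a ∈ Y then 1 else 0)) := by
        refine Finset.sum_congr rfl fun x _ => ?_
        rw [sq, hF, Finset.sum_mul_sum]
    _ = ∑ j ∈ Finset.range K, ∑ l ∈ Finset.range K, ∑ x : Gp p d,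
          ((if x - j • a ∈ Y then 1 else 0) * (if x - l • a ∈ Y then 1 else 0)) := by
        rw [Finset.sum_comm]
        exact Finset.sum_congr rfl fun j _ => Finset.sum_comm
    _ = ∑ j ∈ Finset.range K, ∑ l ∈ Finset.range K, Nv Y (j • a - l • a) := by
        refine Finset.sum_congr rfl fun j _ => Finset.sum_congr rfl fun l _ => ?_
        rw [← filter_pair_card Y (j • a) (l • a), Finset.card_filter]
        refine Finset.sum_congr rfl fun x _ => ?_
        rw [ite_zero_mul_ite_zero, one_mul]

private lemma per_a_lower (Y : Finset (Gp p d)) (K : ℕ) (a : Gp p d) (e0 : ℝ)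
    (he0 : 0 ≤ e0) (hfa : (fv Y a : ℝ) ≤ e0 * Y.card) :
    (K:ℝ)^2 * Y.card - 2 * K^3 * e0 * Y.card ≤ ∑ x : Gp p d, ((Fc Y K a x : ℝ))^2 := by
  have hcast : (∑ x : Gp p d, ((Fc Y K a x : ℝ))^2)
      = ∑ j ∈ Finset.range K, ∑ l ∈ Finset.range K, ((Nv Y (j • a - l • a) : ℝ)) := by
    have := sum_Fc_sq Y K a
    have h2 : ((∑ x : Gp p d, (Fc Y K a x) ^ 2 : ℕ) : ℝ)
        = ((∑ j ∈ Finset.range K, ∑ l ∈ Finset.range K, Nv Y (j • a - l • a) : ℕ) : ℝ) := by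
      rw [this]
    push_cast at h2
    convert h2 using 1
  rw [hcast]
  have hterm : ∀ j ∈ Finset.range K, ∀ l ∈ Finset.range K,
      (Y.card : ℝ) - 2 * K * e0 * Y.card ≤ (Nv Y (j • a - l • a) : ℝ) := by
    intro j hj l hl
    have hNfv : (Nv Y (j • a - l • a) : ℝ) = (Y.card : ℝ) - (fv Y (j • a - l • a) : ℝ) := by
      have := Nv_add_fv Y (j • a - l • a)
      have := congrArg (fun n : ℕ => (n : ℝ)) this
      push_cast at this
      linarith
    rw [hNfv]
    have hfv2 : (fv Y (j • a - l • a) : ℝ) ≤ 2 * K * e0 * Y.card := by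
      have h1 : fv Y (j • a - l • a) ≤ fv Y (j • a) + fv Y (l • a) := fv_sub_le Y _ _
      have h2 : fv Y (j • a) ≤ j * fv Y a := fv_nsmul_le Y a j
      have h3 : fv Y (l • a) ≤ l * fv Y a := fv_nsmul_le Y a l
      have hj' : j ≤ K := (Finset.mem_range.1 hj).le
      have hl' : l ≤ K := (Finset.mem_range.1 hl).le
      have : fv Y (j • a - l • a) ≤ 2 * K * fv Y a := by
        calc fv Y (j • a - l • a) ≤ j * fv Y a + l * fv Y a := by omega
          _ ≤ K * fv Y a + K * fv Y a := by
              have := Nat.mul_le_mul_right (fv Y a) hj'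
              have := Nat.mul_le_mul_right (fv Y a) hl'
              omega
          _ = 2 * K * fv Y a := by ring
      calc (fv Y (j • a - l • a) : ℝ) ≤ ((2 * K * fv Y a : ℕ) : ℝ) := by exact_mod_cast this
        _ = 2 * K * (fv Y a : ℝ) := by push_cast; ring
        _ ≤ 2 * K * (e0 * Y.card) := by
            apply mul_le_mul_of_nonneg_left hfa
            positivity
        _ = 2 * K * e0 * Y.card := by ring
    linarith
  calc (K:ℝ)^2 * Y.card - 2 * K^3 * e0 * Y.card
      = ∑ _j ∈ Finset.range K, ∑ _l ∈ Finset.range K, ((Y.card : ℝ) - 2 * K * e0 * Y.card) := by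
        rw [Finset.sum_const, Finset.sum_const]
        simp [Finset.card_range]
        ring
    _ ≤ _ := by
        refine Finset.sum_le_sum fun j hj => Finset.sum_le_sum fun l hl => hterm j hj l hl

private noncomputable def ech (p : ℕ) [NeZero p] : AddChar (ZMod p) ℂ :=
  AddChar.zmodChar p (Complex.isPrimitiveRoot_exp p (NeZero.ne p)).pow_eq_one


private lemma ech_prim : (ech p).IsPrimitive :=
  AddChar.zmodChar_primitive_of_primitive_root p (Complex.isPrimitiveRoot_exp p (NeZero.ne p))

private lemma ech_abs (c : ZMod p) : ‖ech p c‖ = 1 := by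
  have h2 : ‖Complex.exp (2 * Real.pi * Complex.I / p)‖ = 1 := by
    rw [Complex.norm_exp]
    have : ((2 * (Real.pi:ℂ) * Complex.I / p)).re = 0 := by
      simp [Complex.div_re]
    rw [this, Real.exp_zero]
  rw [ech, AddChar.zmodChar_apply, norm_pow, h2, one_pow]

private lemma ech_conj (c : ZMod p) : (starRingEnd ℂ) (ech p c) = ech p (-c) := by
  have habs : ‖ech p c‖ = 1 := ech_abs c
  have h1 : ech p (-c) * ech p c = 1 := by
    rw [← AddChar.map_add_eq_mul, neg_add_cancel, AddChar.map_zero_eq_one]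
  have h2 : (ech p c)⁻¹ = (starRingEnd ℂ) (ech p c) := Complex.inv_eq_conj habs
  rw [← h2]
  exact (eq_inv_of_mul_eq_one_left h1).symm

private lemma sum_ech_mul (b : ZMod p) :
    ∑ c : ZMod p, ech p (b * c) = if b = 0 then (p : ℂ) else 0 := by
  by_cases hb : b = 0
  · subst hb
    simp [AddChar.map_zero_eq_one, ZMod.card]
  · rw [if_neg hb]
    have h := AddChar.sum_eq_zero_of_ne_one (ech_prim hb)
    simpa [AddChar.mulShift_apply] using h

private noncomputable def Ez (ξ x : Gp p d) : ℂ := ech p (∑ i, ξ i * x i)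

private lemma Ez_mul (ξ x y : Gp p d) : Ez ξ x * Ez ξ y = Ez ξ (x + y) := by
  rw [Ez, Ez, Ez, ← AddChar.map_add_eq_mul]
  congr 1
  rw [← Finset.sum_add_distrib]
  exact Finset.sum_congr rfl fun i _ => by simp [mul_add]

private lemma Ez_conj (ξ x : Gp p d) : (starRingEnd ℂ) (Ez ξ x) = Ez ξ (-x) := by
  rw [Ez, ech_conj, Ez]
  congr 1
  rw [← Finset.sum_neg_distrib]
  exact Finset.sum_congr rfl fun i _ => by simp

private lemma ech_prod (s : Finset (Fin d)) (g : Fin d → ZMod p) :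
    ech p (∑ i ∈ s, g i) = ∏ i ∈ s, ech p (g i) := by
  induction s using Finset.cons_induction with
  | empty => simp [AddChar.map_zero_eq_one]
  | cons i s hi ih =>
      rw [Finset.sum_cons, Finset.prod_cons, AddChar.map_add_eq_mul, ih]

private lemma sum_Ez (z : Gp p d) :
    ∑ ξ : Gp p d, Ez ξ z = if z = 0 then ((p:ℂ))^d else 0 := by
  have h1 : ∀ ξ : Gp p d, Ez ξ z = ∏ i, ech p (ξ i * z i) := by
    intro ξ; rw [Ez, ech_prod]
  calc ∑ ξ : Gp p d, Ez ξ z = ∑ ξ : Gp p d, ∏ i, ech p (ξ i * z i) :=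
        Finset.sum_congr rfl fun ξ _ => h1 ξ
    _ = ∏ i, ∑ c : ZMod p, ech p (c * z i) := by
        rw [Finset.prod_univ_sum]
        rw [← Fintype.piFinset_univ]
    _ = ∏ i, (if z i = 0 then (p:ℂ) else 0) := by
        refine Finset.prod_congr rfl fun i _ => ?_
        rw [← sum_ech_mul (z i)]
        exact Finset.sum_congr rfl fun c _ => by rw [mul_comm]
    _ = if z = 0 then ((p:ℂ))^d else 0 := by
        by_cases hz : z = 0
        · subst hz
          simp
        · rw [if_neg hz]
          obtain ⟨i, hi⟩ : ∃ i, z i ≠ 0 := by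
            by_contra hc
            push_neg at hc
            exact hz (funext hc)
          exact Finset.prod_eq_zero (Finset.mem_univ i) (by rw [if_neg hi])

-- === section 4 ===
private lemma Nv_neg (Y : Finset (Gp p d)) (z : Gp p d) : Nv Y (-z) = Nv Y z := by
  have h1 := Nv_add_fv Y z
  have h2 := Nv_add_fv Y (-z)
  have h3 := fv_neg Y z
  omega

private noncomputable def Yhat (Y : Finset (Gp p d)) (ξ : Gp p d) : ℂ := ∑ y ∈ Y, Ez ξ y

private noncomputable def Dk (K : ℕ) (ξ a : Gp p d) : ℂ := ∑ j ∈ Finset.range K, Ez ξ (j • a)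

private lemma Yhat_mul_conj (Y : Finset (Gp p d)) (ξ : Gp p d) :
    Yhat Y ξ * (starRingEnd ℂ) (Yhat Y ξ) = ∑ y ∈ Y, ∑ y' ∈ Y, Ez ξ (y - y') := by
  rw [Yhat, map_sum, Finset.sum_mul_sum]
  refine Finset.sum_congr rfl fun y _ => Finset.sum_congr rfl fun y' _ => ?_
  rw [Ez_conj, Ez_mul, sub_eq_add_neg]

private lemma Dk_mul_conj (K : ℕ) (ξ a : Gp p d) :
    Dk K ξ a * (starRingEnd ℂ) (Dk K ξ a)
      = ∑ j ∈ Finset.range K, ∑ l ∈ Finset.range K, Ez ξ (j • a - l • a) := by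
  rw [Dk, map_sum, Finset.sum_mul_sum]
  refine Finset.sum_congr rfl fun j _ => Finset.sum_congr rfl fun l _ => ?_
  rw [Ez_conj, Ez_mul, sub_eq_add_neg]

private lemma parseval_Y (Y : Finset (Gp p d)) :
    ∑ ξ : Gp p d, Yhat Y ξ * (starRingEnd ℂ) (Yhat Y ξ) = ((p:ℂ))^d * Y.card := by
  calc ∑ ξ : Gp p d, Yhat Y ξ * (starRingEnd ℂ) (Yhat Y ξ)
      = ∑ ξ : Gp p d, ∑ y ∈ Y, ∑ y' ∈ Y, Ez ξ (y - y') :=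
        Finset.sum_congr rfl fun ξ _ => Yhat_mul_conj Y ξ
    _ = ∑ y ∈ Y, ∑ y' ∈ Y, ∑ ξ : Gp p d, Ez ξ (y - y') := by
        rw [Finset.sum_comm]
        exact Finset.sum_congr rfl fun y _ => Finset.sum_comm
    _ = ∑ y ∈ Y, ∑ y' ∈ Y, (if y - y' = 0 then ((p:ℂ))^d else 0) :=
        Finset.sum_congr rfl fun y _ => Finset.sum_congr rfl fun y' _ => sum_Ez _
    _ = ∑ y ∈ Y, ∑ y' ∈ Y, (if y' = y then ((p:ℂ))^d else 0) := by
        refine Finset.sum_congr rfl fun y _ => Finset.sum_congr rfl fun y' _ => ?_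
        exact if_congr (by rw [sub_eq_zero]; exact ⟨fun h => h.symm, fun h => h.symm⟩) rfl rfl
    _ = ∑ y ∈ Y, ((p:ℂ))^d := by
        refine Finset.sum_congr rfl fun y hy => ?_
        rw [Finset.sum_ite_eq' Y y (fun _ => ((p:ℂ))^d), if_pos hy]
    _ = ((p:ℂ))^d * Y.card := by
        rw [Finset.sum_const]
        simp [mul_comm]

private lemma count_pairs (Y : Finset (Gp p d)) (w : Gp p d) :
    ∑ y ∈ Y, ∑ y' ∈ Y, (if y - y' + w = 0 then ((p:ℂ))^d else 0)
      = ((p:ℂ))^d * (Nv Y (-w) : ℂ) := by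
  have h1 : ∀ y, ∑ y' ∈ Y, (if y - y' + w = 0 then ((p:ℂ))^d else 0)
      = (if y + w ∈ Y then ((p:ℂ))^d else 0) := by
    intro y
    have : ∀ y', (if y - y' + w = 0 then ((p:ℂ))^d else 0)
        = (if y' = y + w then ((p:ℂ))^d else 0) := by
      intro y'
      refine if_congr ?_ rfl rfl
      constructor
      · intro h
        have : y' = y' + (y - y' + w) := by rw [h]; abel
        rw [this]; abel
      · intro h; rw [h]; abel
    rw [Finset.sum_congr rfl fun y' _ => this y']
    exact Finset.sum_ite_eq' Y (y + w) (fun _ => ((p:ℂ))^d)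
  rw [Finset.sum_congr rfl fun y _ => h1 y]
  have h2 : ∑ y ∈ Y, (if y + w ∈ Y then ((p:ℂ))^d else 0)
      = ((p:ℂ))^d * ((Y.filter (fun y => y + w ∈ Y)).card : ℂ) := by
    rw [Finset.sum_ite, Finset.sum_const, Finset.sum_const_zero, add_zero]
    simp [mul_comm]
  rw [h2]
  congr 2
  rw [Nv]
  congr 1
  ext y
  simp only [Finset.mem_filter, Finset.mem_inter, mem_trs, sub_neg_eq_add]

private lemma master_per_a (Y : Finset (Gp p d)) (K : ℕ) (a : Gp p d) :
    ∑ ξ : Gp p d, (Yhat Y ξ * (starRingEnd ℂ) (Yhat Y ξ)) * (Dk K ξ a * (starRingEnd ℂ) (Dk K ξ a))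
      = ((p:ℂ))^d * ∑ x : Gp p d, ((Fc Y K a x : ℂ))^2 := by
  have hcast : ∑ x : Gp p d, ((Fc Y K a x : ℂ))^2
      = ∑ j ∈ Finset.range K, ∑ l ∈ Finset.range K, ((Nv Y (j • a - l • a) : ℕ) : ℂ) := by
    have h := sum_Fc_sq Y K a
    have h2 : ((∑ x : Gp p d, (Fc Y K a x) ^ 2 : ℕ) : ℂ)
        = ((∑ j ∈ Finset.range K, ∑ l ∈ Finset.range K, Nv Y (j • a - l • a) : ℕ) : ℂ) := by
      rw [h]
    push_cast at h2
    exact_mod_cast h2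
  rw [hcast]
  calc ∑ ξ : Gp p d, (Yhat Y ξ * (starRingEnd ℂ) (Yhat Y ξ)) * (Dk K ξ a * (starRingEnd ℂ) (Dk K ξ a))
      = ∑ ξ : Gp p d, ∑ y ∈ Y, ∑ j ∈ Finset.range K, ∑ y' ∈ Y, ∑ l ∈ Finset.range K,
          Ez ξ (y - y' + (j • a - l • a)) := by
        refine Finset.sum_congr rfl fun ξ _ => ?_
        rw [Yhat_mul_conj, Dk_mul_conj, Finset.sum_mul_sum]
        refine Finset.sum_congr rfl fun y _ => Finset.sum_congr rfl fun j _ => ?_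
        rw [Finset.sum_mul_sum]
        refine Finset.sum_congr rfl fun y' _ => Finset.sum_congr rfl fun l _ => ?_
        rw [Ez_mul]
    _ = ∑ y ∈ Y, ∑ j ∈ Finset.range K, ∑ y' ∈ Y, ∑ l ∈ Finset.range K, ∑ ξ : Gp p d,
          Ez ξ (y - y' + (j • a - l • a)) := by
        rw [Finset.sum_comm]
        refine Finset.sum_congr rfl fun y _ => ?_
        rw [Finset.sum_comm]
        refine Finset.sum_congr rfl fun j _ => ?_
        rw [Finset.sum_comm]
        refine Finset.sum_congr rfl fun y' _ => ?_
        rw [Finset.sum_comm]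
    _ = ∑ y ∈ Y, ∑ j ∈ Finset.range K, ∑ y' ∈ Y, ∑ l ∈ Finset.range K,
          (if y - y' + (j • a - l • a) = 0 then ((p:ℂ))^d else 0) := by
        refine Finset.sum_congr rfl fun y _ => Finset.sum_congr rfl fun j _ => ?_
        refine Finset.sum_congr rfl fun y' _ => Finset.sum_congr rfl fun l _ => ?_
        exact sum_Ez _
    _ = ∑ j ∈ Finset.range K, ∑ l ∈ Finset.range K, ∑ y ∈ Y, ∑ y' ∈ Y,
          (if y - y' + (j • a - l • a) = 0 then ((p:ℂ))^d else 0) := by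
        rw [Finset.sum_comm]
        refine Finset.sum_congr rfl fun j _ => ?_
        refine Eq.trans (Finset.sum_congr rfl fun y _ => Finset.sum_comm) ?_
        rw [Finset.sum_comm]
    _ = ∑ j ∈ Finset.range K, ∑ l ∈ Finset.range K, ((p:ℂ))^d * ((Nv Y (j • a - l • a) : ℕ) : ℂ) := by
        refine Finset.sum_congr rfl fun j _ => Finset.sum_congr rfl fun l _ => ?_
        rw [count_pairs Y (j • a - l • a), Nv_neg]
    _ = ((p:ℂ))^d * ∑ j ∈ Finset.range K, ∑ l ∈ Finset.range K, ((Nv Y (j • a - l • a) : ℕ) : ℂ) := by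
        rw [Finset.mul_sum]
        refine Finset.sum_congr rfl fun j _ => ?_
        rw [Finset.mul_sum]

-- === section 5 ===

private noncomputable def DD (p K : ℕ) [NeZero p] (c : ZMod p) : ℂ :=
  ∑ j ∈ Finset.range K, ech p ((j : ZMod p) * c)

private lemma Dk_eq_DD (K : ℕ) (ξ a : Gp p d) : Dk K ξ a = DD p K (∑ i, ξ i * a i) := by
  rw [Dk, DD]
  refine Finset.sum_congr rfl fun j _ => ?_
  rw [Ez]
  congr 1
  rw [Finset.mul_sum]
  refine Finset.sum_congr rfl fun i _ => ?_
  have : (j • a) i = (j : ZMod p) * a i := by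
    rw [Pi.smul_apply, nsmul_eq_mul]
  rw [this]
  ring

private lemma natCast_zmod_inj {j l : ℕ} (hj : j < p) (hl : l < p)
    (h : (j : ZMod p) = (l : ZMod p)) : j = l := by
  have := (ZMod.natCast_eq_natCast_iff j l p).1 h
  rwa [Nat.ModEq, Nat.mod_eq_of_lt hj, Nat.mod_eq_of_lt hl] at this

private lemma parseval_DD (K : ℕ) (hKp : K ≤ p) :
    ∑ c : ZMod p, DD p K c * (starRingEnd ℂ) (DD p K c) = (p : ℂ) * K := by
  have expand : ∀ c : ZMod p, DD p K c * (starRingEnd ℂ) (DD p K c)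
      = ∑ j ∈ Finset.range K, ∑ l ∈ Finset.range K, ech p (((j : ZMod p) - l) * c) := by
    intro c
    rw [DD, map_sum, Finset.sum_mul_sum]
    refine Finset.sum_congr rfl fun j _ => Finset.sum_congr rfl fun l _ => ?_
    rw [ech_conj, ← AddChar.map_add_eq_mul]
    congr 1
    ring
  calc ∑ c : ZMod p, DD p K c * (starRingEnd ℂ) (DD p K c)
      = ∑ c : ZMod p, ∑ j ∈ Finset.range K, ∑ l ∈ Finset.range K,
          ech p (((j : ZMod p) - l) * c) := Finset.sum_congr rfl fun c _ => expand c
    _ = ∑ j ∈ Finset.range K, ∑ l ∈ Finset.range K, ∑ c : ZMod p,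
          ech p (((j : ZMod p) - l) * c) := by
        rw [Finset.sum_comm]
        exact Finset.sum_congr rfl fun j _ => Finset.sum_comm
    _ = ∑ j ∈ Finset.range K, ∑ l ∈ Finset.range K,
          (if ((j : ZMod p) - l) = 0 then (p:ℂ) else 0) :=
        Finset.sum_congr rfl fun j _ => Finset.sum_congr rfl fun l _ => sum_ech_mul _
    _ = ∑ j ∈ Finset.range K, ∑ l ∈ Finset.range K, (if l = j then (p:ℂ) else 0) := by
        refine Finset.sum_congr rfl fun j hj => Finset.sum_congr rfl fun l hl => ?_
        refine if_congr ⟨fun h => ?_, fun h => by rw [h, sub_self]⟩ rfl rfl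
        have hc : (j : ZMod p) = (l : ZMod p) := by
          have := sub_eq_zero.1 h
          exact this.symm ▸ rfl
        exact (natCast_zmod_inj (lt_of_lt_of_le (Finset.mem_range.1 hj) hKp)
          (lt_of_lt_of_le (Finset.mem_range.1 hl) hKp) hc).symm
    _ = ∑ j ∈ Finset.range K, (p:ℂ) := by
        refine Finset.sum_congr rfl fun j hj => ?_
        rw [Finset.sum_ite_eq' (Finset.range K) j (fun _ => (p:ℂ)), if_pos hj]
    _ = (p:ℂ) * K := by rw [Finset.sum_const]; simp [mul_comm]

-- multiset helpers
private lemma mswap {α β : Type*} [DecidableEq β] (B : Multiset α) (s : Finset β)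
    (f : α → β → ℂ) :
    (B.map (fun a => ∑ x ∈ s, f a x)).sum = ∑ x ∈ s, (B.map (fun a => f a x)).sum := by
  induction B using Multiset.induction_on with
  | empty => simp
  | cons a B ih =>
      simp only [Multiset.map_cons, Multiset.sum_cons, ih, Finset.sum_add_distrib]

private lemma mregroup {R : Type*} [AddCommMonoid R] (B : Multiset (Gp p d)) (ξ : Gp p d)
    (g : ZMod p → R) :
    (B.map (fun a => g (∑ i, ξ i * a i))).sum
      = ∑ c : ZMod p, (Multiset.card (B.filter (fun a => ∑ i, ξ i * a i = c))) • g c := by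
  induction B using Multiset.induction_on with
  | empty => simp
  | cons a B ih =>
      rw [Multiset.map_cons, Multiset.sum_cons, ih]
      have hfil : ∀ c : ZMod p,
          Multiset.card ((a ::ₘ B).filter (fun x => ∑ i, ξ i * x i = c))
          = Multiset.card (B.filter (fun x => ∑ i, ξ i * x i = c))
            + (if (∑ i, ξ i * a i) = c then 1 else 0) := by
        intro c
        rw [Multiset.filter_cons]
        by_cases h : (∑ i, ξ i * a i) = c
        · rw [if_pos h, if_pos h]
          simp
        · rw [if_neg h, if_neg h]
          simp
      calc g (∑ i, ξ i * a i) + ∑ c : ZMod p, (Multiset.card (B.filter (fun x => ∑ i, ξ i * x i = c))) • g c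
          = ∑ c : ZMod p, ((if (∑ i, ξ i * a i) = c then 1 else 0) • g c)
            + ∑ c : ZMod p, (Multiset.card (B.filter (fun x => ∑ i, ξ i * x i = c))) • g c := by
            congr 1
            have : ∀ c : ZMod p, (if (∑ i, ξ i * a i) = c then 1 else 0) • g c
                = (if c = (∑ i, ξ i * a i) then g c else 0) := by
              intro c
              by_cases h : (∑ i, ξ i * a i) = c
              · rw [if_pos h, if_pos h.symm, one_smul]
              · rw [if_neg h, if_neg (fun hc => h hc.symm), zero_smul]
            rw [Finset.sum_congr rfl fun c _ => this c]
            rw [Finset.sum_ite_eq' Finset.univ _ g, if_pos (Finset.mem_univ _)]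
          _ = ∑ c : ZMod p, (Multiset.card ((a ::ₘ B).filter (fun x => ∑ i, ξ i * x i = c))) • g c := by
            rw [← Finset.sum_add_distrib]
            refine Finset.sum_congr rfl fun c _ => ?_
            rw [hfil c, add_smul]
            ring_nf
            rw [add_comm]

private lemma msum_const_le {C : ℝ} (B : Multiset (Gp p d)) (f : Gp p d → ℝ)
    (h : ∀ a ∈ B, C ≤ f a) :
    (Multiset.card B : ℝ) * C ≤ (B.map f).sum := by
  induction B using Multiset.induction_on with
  | empty => simp
  | cons a B ih =>
      have h1 : C ≤ f a := h a (Multiset.mem_cons_self a B)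
      have h2 : (Multiset.card B : ℝ) * C ≤ (B.map f).sum :=
        ih (fun x hx => h x (Multiset.mem_cons_of_mem hx))
      simp only [Multiset.map_cons, Multiset.sum_cons, Multiset.card_cons]
      push_cast
      nlinarith [h1, h2]

-- === section 6 ===

private lemma cast_msum {α : Type*} (B : Multiset α) (f : α → ℝ) :
    (((B.map f).sum : ℝ) : ℂ) = (B.map (fun a => ((f a : ℝ) : ℂ))).sum := by
  rw [show (((B.map f).sum : ℝ) : ℂ) = Complex.ofRealHom (B.map f).sum from rfl,
    map_multiset_sum, Multiset.map_map]
  rfl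

private lemma Ez_zero_left (x : Gp p d) : Ez (0 : Gp p d) x = 1 := by
  rw [Ez]
  have : (∑ i, (0 : Gp p d) i * x i) = 0 := by simp
  rw [this, AddChar.map_zero_eq_one]

private lemma Dk_zero (K : ℕ) (a : Gp p d) : Dk K (0 : Gp p d) a = (K : ℂ) := by
  rw [Dk]
  rw [Finset.sum_congr rfl fun j _ => Ez_zero_left (j • a)]
  simp

private lemma Yhat_zero (Y : Finset (Gp p d)) : Yhat Y (0 : Gp p d) = (Y.card : ℂ) := by
  rw [Yhat]
  rw [Finset.sum_congr rfl fun y _ => Ez_zero_left y]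
  simp

private lemma master_sum (Y : Finset (Gp p d)) (K : ℕ) (B : Multiset (Gp p d)) :
    ((p:ℝ)^d) * (B.map (fun a => ∑ x : Gp p d, ((Fc Y K a x : ℝ))^2)).sum
    = ∑ ξ : Gp p d,
        Complex.normSq (Yhat Y ξ) * (B.map (fun a => Complex.normSq (Dk K ξ a))).sum := by
  apply Complex.ofReal_injective
  push_cast
  rw [cast_msum]
  calc ((p:ℂ))^d * (B.map (fun a => ((∑ x : Gp p d, ((Fc Y K a x : ℝ))^2 : ℝ) : ℂ))).sum
      = ((p:ℂ))^d * (B.map (fun a => ∑ x : Gp p d, ((Fc Y K a x : ℂ))^2)).sum := by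
        congr 1
        refine congrArg _ (Multiset.map_congr rfl fun a _ => ?_)
        push_cast
        rfl
    _ = (B.map (fun a => ((p:ℂ))^d * ∑ x : Gp p d, ((Fc Y K a x : ℂ))^2)).sum := by
        rw [Multiset.sum_map_mul_left]
    _ = (B.map (fun a => ∑ ξ : Gp p d,
          (Yhat Y ξ * (starRingEnd ℂ) (Yhat Y ξ)) * (Dk K ξ a * (starRingEnd ℂ) (Dk K ξ a)))).sum := by
        refine congrArg _ (Multiset.map_congr rfl fun a _ => ?_)
        rw [master_per_a]
    _ = ∑ ξ : Gp p d, (B.map (fun a =>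
          (Yhat Y ξ * (starRingEnd ℂ) (Yhat Y ξ)) * (Dk K ξ a * (starRingEnd ℂ) (Dk K ξ a)))).sum := by
        rw [mswap]
    _ = ∑ ξ : Gp p d, (Yhat Y ξ * (starRingEnd ℂ) (Yhat Y ξ)) *
          (B.map (fun a => (Dk K ξ a * (starRingEnd ℂ) (Dk K ξ a)))).sum := by
        refine Finset.sum_congr rfl fun ξ _ => ?_
        rw [Multiset.sum_map_mul_left]
    _ = ∑ ξ : Gp p d, ((Complex.normSq (Yhat Y ξ) : ℝ) : ℂ) *
          (B.map (fun a => ((Complex.normSq (Dk K ξ a) : ℝ) : ℂ))).sum := by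
        refine Finset.sum_congr rfl fun ξ _ => ?_
        rw [Complex.mul_conj]
        congr 1
        exact congrArg _ (Multiset.map_congr rfl fun a _ => (Complex.mul_conj _))
    _ = ∑ ξ : Gp p d, ((Complex.normSq (Yhat Y ξ) * (B.map (fun a => Complex.normSq (Dk K ξ a))).sum : ℝ) : ℂ) := by
        refine Finset.sum_congr rfl fun ξ _ => ?_
        rw [← cast_msum]
        push_cast
        rfl
    _ = ∑ ξ : Gp p d, ((Complex.normSq (Yhat Y ξ) :ℝ):ℂ) * ((((B.map (fun a => Complex.normSq (Dk K ξ a))).sum : ℝ)):ℂ) := by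
        refine Finset.sum_congr rfl fun ξ _ => ?_
        push_cast
        rfl

private lemma parseval_Y_real (Y : Finset (Gp p d)) :
    ∑ ξ : Gp p d, Complex.normSq (Yhat Y ξ) = (p:ℝ)^d * Y.card := by
  apply Complex.ofReal_injective
  push_cast
  calc (∑ ξ : Gp p d, ((Complex.normSq (Yhat Y ξ) : ℝ) : ℂ))
      = ∑ ξ : Gp p d, Yhat Y ξ * (starRingEnd ℂ) (Yhat Y ξ) :=
        Finset.sum_congr rfl fun ξ _ => (Complex.mul_conj _).symm
    _ = ((p:ℂ))^d * Y.card := parseval_Y Y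

set_option maxHeartbeats 1000000 in
private theorem key {p d : ℕ} [hp : Fact p.Prime] (hd : 1 ≤ d) (W : ℝ) (hW : 1 ≤ W)
    (B : Multiset (Fin d → ZMod p)) (hBne : B ≠ 0)
    (hfib : ∀ ξ : Fin d → ZMod p, ξ ≠ 0 → ∀ c : ZMod p,
      ((Multiset.card (B.filter (fun x => (∑ i, ξ i * x i) = c)) : ℝ))
        ≤ (Multiset.card B : ℝ) / (4*W))
    (Y : Finset (Fin d → ZMod p)) (hYne : Y.Nonempty) (hYhalf : (Y.card : ℝ) ≤ (p:ℝ)^d / 2) :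
    ∃ b ∈ B, (W/(16*p)) * Y.card ≤ ((fv Y b : ℕ) : ℝ) := by
  by_contra hcon
  push_neg at hcon
  haveI : Fact (1 < p) := ⟨hp.out.one_lt⟩
  set M := Multiset.card B with hMdef
  have hM0 : 0 < M := Multiset.card_pos.2 hBne
  have hMR : (0:ℝ) < M := by exact_mod_cast hM0
  have hppos : 0 < p := hp.out.pos
  have hpR : (0:ℝ) < p := by exact_mod_cast hppos
  have hW0 : (0:ℝ) < W := lt_of_lt_of_le one_pos hW
  set YC := ((Y.card : ℕ) : ℝ) with hYCdef
  have hYC1 : (1:ℝ) ≤ YC := by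
    have h := Finset.card_pos.2 hYne
    rw [hYCdef]
    exact_mod_cast Nat.one_le_iff_ne_zero.2 h.ne'
  have hYC0 : (0:ℝ) < YC := lt_of_lt_of_le one_pos hYC1
  -- 4W ≤ p
  have h4W : 4 * W ≤ (p:ℝ) := by
    set ξ0 : Fin d → ZMod p := Pi.single ⟨0, hd⟩ (1 : ZMod p) with hξ0def
    have hξ0 : ξ0 ≠ 0 := by
      intro h
      have h2 := congrFun h ⟨0, hd⟩
      rw [hξ0def, Pi.single_eq_same] at h2
      exact one_ne_zero h2
    have hpart : (∑ c : ZMod p,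
        Multiset.card (B.filter (fun x => (∑ i, ξ0 i * x i) = c))) = M := by
      have h := mregroup (R := ℕ) B ξ0 (fun _ => 1)
      simp only [smul_eq_mul, mul_one] at h
      rw [← h]
      rw [Multiset.map_const']
      simp
      rfl
    have hle : (M:ℝ) ≤ (p:ℝ) * ((M:ℝ)/(4*W)) := by
      have hcast : (M:ℝ) = ∑ c : ZMod p,
          ((Multiset.card (B.filter (fun x => (∑ i, ξ0 i * x i) = c)) : ℝ)) := by
        rw [← hpart]
        push_cast
        rfl
      calc (M:ℝ) = (∑ c : ZMod p, ((Multiset.card (B.filter (fun x => (∑ i, ξ0 i * x i) = c)) : ℝ))) := hcast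
        _ ≤ ∑ _c : ZMod p, (M:ℝ)/(4*W) :=
            Finset.sum_le_sum fun c _ => hfib ξ0 hξ0 c
        _ = (p:ℝ) * ((M:ℝ)/(4*W)) := by
            rw [Finset.sum_const, Finset.card_univ, ZMod.card, nsmul_eq_mul]
    have h4Wpos : (0:ℝ) < 4*W := by linarith
    have heq : (p:ℝ) * ((M:ℝ)/(4*W)) * (4*W) = (p:ℝ)*(M:ℝ) := by field_simp
    have h2 : (M:ℝ)*(4*W) ≤ (p:ℝ)*(M:ℝ) := by
      calc (M:ℝ)*(4*W) ≤ (p:ℝ) * ((M:ℝ)/(4*W)) * (4*W) :=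
            mul_le_mul_of_nonneg_right hle h4Wpos.le
        _ = (p:ℝ)*(M:ℝ) := heq
    have h3 : 4*W*(M:ℝ) ≤ (p:ℝ)*(M:ℝ) := by linarith
    exact le_of_mul_le_mul_right (by linarith) hMR
  have hWp4 : W ≤ (p:ℝ)/4 := by linarith
  -- K
  set K := ⌈(p:ℝ)/W⌉₊ with hKdef
  have hKlb : (p:ℝ)/W ≤ (K:ℝ) := Nat.le_ceil _
  have hKub : (K:ℝ) ≤ (p:ℝ)/W + 1 := by
    have := Nat.ceil_lt_add_one (a := (p:ℝ)/W) (by positivity)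
    linarith
  have hKp : K ≤ p := by
    rw [hKdef, Nat.ceil_le]
    calc (p:ℝ)/W ≤ (p:ℝ) := div_le_self hpR.le hW
      _ = ((p:ℕ):ℝ) := rfl
  have hK4 : (4:ℝ) ≤ (K:ℝ) := by
    refine le_trans ?_ hKlb
    rw [le_div_iff₀ hW0]
    linarith
  have hK0 : (0:ℝ) < K := by linarith
  have hpWK : (p:ℝ) ≤ W * (K:ℝ) := by
    rw [div_le_iff₀ hW0] at hKlb
    linarith [hKlb]
  set e0 := W/(16*(p:ℝ)) with he0def
  have he0 : (0:ℝ) < e0 := by positivity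
  have hsmall : ∀ b ∈ B, (fv Y b : ℝ) ≤ e0 * YC := fun b hb => (hcon b hb).le
  -- lower bound for T
  set T := (B.map (fun a => ∑ x : Fin d → ZMod p, ((Fc Y K a x : ℝ))^2)).sum with hTdef
  have hlow : (M:ℝ) * ((K:ℝ)^2*YC - 2*(K:ℝ)^3*e0*YC) ≤ T := by
    refine msum_const_le B _ fun a ha => ?_
    exact per_a_lower Y K a e0 he0.le (hsmall a ha)
  -- upper bound for T
  set Sr : (Fin d → ZMod p) → ℝ :=
    fun ξ => (B.map (fun a => Complex.normSq (Dk K ξ a))).sum with hSrdef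
  set nsqY : (Fin d → ZMod p) → ℝ := fun ξ => Complex.normSq (Yhat Y ξ) with hnsqYdef
  have hmaster : ((p:ℝ)^d) * T = ∑ ξ : Fin d → ZMod p, nsqY ξ * Sr ξ := master_sum Y K B
  have hSr0 : Sr 0 = (K:ℝ)^2 * M := by
    rw [hSrdef]
    simp only
    have : (B.map (fun a => Complex.normSq (Dk K (0 : Fin d → ZMod p) a))).sum
        = (B.map (fun _ => ((K:ℝ)^2))).sum := by
      refine congrArg _ (Multiset.map_congr rfl fun a _ => ?_)
      rw [Dk_zero]
      rw [Complex.normSq_natCast]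
      push_cast
      ring
    rw [this, Multiset.map_const', Multiset.sum_replicate, nsmul_eq_mul]
    ring
  have hnsqY0 : nsqY 0 = YC^2 := by
    rw [hnsqYdef]
    simp only
    rw [Yhat_zero, Complex.normSq_natCast]
    push_cast
    ring
  have hSrnonneg : ∀ ξ, 0 ≤ Sr ξ := by
    intro ξ
    rw [hSrdef]
    refine Multiset.sum_nonneg fun r hr => ?_
    obtain ⟨a, _, rfl⟩ := Multiset.mem_map.1 hr
    exact Complex.normSq_nonneg _
  have hnsqYnonneg : ∀ ξ, 0 ≤ nsqY ξ := fun ξ => Complex.normSq_nonneg _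
  have hSbound : ∀ ξ : Fin d → ZMod p, ξ ≠ 0 → Sr ξ ≤ (1/4) * (K:ℝ)^2 * M := by
    intro ξ hξ
    have h1 : Sr ξ = ∑ c : ZMod p,
        (Multiset.card (B.filter (fun a => (∑ i, ξ i * a i) = c)))
          • Complex.normSq (DD p K c) := by
      rw [hSrdef]
      simp only
      have heq : (fun a => Complex.normSq (Dk K ξ a))
          = (fun a => (fun c => Complex.normSq (DD p K c)) (∑ i, ξ i * a i)) := by
        funext a
        rw [Dk_eq_DD]
      rw [heq]
      exact mregroup (R := ℝ) B ξ (fun c => Complex.normSq (DD p K c))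
    have hDDsum : ∑ c : ZMod p, Complex.normSq (DD p K c) = (p:ℝ) * K := by
      apply Complex.ofReal_injective
      push_cast
      calc (∑ c : ZMod p, ((Complex.normSq (DD p K c) : ℝ) : ℂ))
          = ∑ c : ZMod p, DD p K c * (starRingEnd ℂ) (DD p K c) :=
            Finset.sum_congr rfl fun c _ => (Complex.mul_conj _).symm
        _ = (p:ℂ) * K := parseval_DD K hKp
    rw [h1]
    calc (∑ c : ZMod p,
        (Multiset.card (B.filter (fun a => (∑ i, ξ i * a i) = c)))
          • Complex.normSq (DD p K c))
        ≤ ∑ c : ZMod p, ((M:ℝ)/(4*W)) * Complex.normSq (DD p K c) := by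
          refine Finset.sum_le_sum fun c _ => ?_
          rw [nsmul_eq_mul]
          exact mul_le_mul_of_nonneg_right (hfib ξ hξ c) (Complex.normSq_nonneg _)
      _ = ((M:ℝ)/(4*W)) * ((p:ℝ) * K) := by
          rw [← Finset.mul_sum, hDDsum]
      _ ≤ (1/4) * (K:ℝ)^2 * M := by
          rw [div_mul_eq_mul_div, div_le_iff₀ (by linarith : (0:ℝ) < 4*W)]
          have hpk : (p:ℝ)*K ≤ W*(K:ℝ)^2 := by nlinarith [hpWK, hK0]
          nlinarith [mul_le_mul_of_nonneg_left hpk hMR.le]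
  -- assemble upper bound
  set n := ((p:ℝ))^d with hndef
  have hn0 : (0:ℝ) < n := by positivity
  have hparseval : ∑ ξ : Fin d → ZMod p, nsqY ξ = n * YC := parseval_Y_real Y
  have hupper : n * T ≤ YC^2 * ((K:ℝ)^2 * M) + (1/4) * (K:ℝ)^2 * M * (n * YC - YC^2) := by
    rw [hmaster]
    have hsplit : ∑ ξ : Fin d → ZMod p, nsqY ξ * Sr ξ
        = nsqY 0 * Sr 0 + ∑ ξ ∈ Finset.univ.erase 0, nsqY ξ * Sr ξ := by
      rw [← Finset.add_sum_erase _ _ (Finset.mem_univ 0)]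
    rw [hsplit, hnsqY0, hSr0]
    have herase : ∑ ξ ∈ Finset.univ.erase 0, nsqY ξ * Sr ξ
        ≤ (1/4) * (K:ℝ)^2 * M * (n * YC - YC^2) := by
      have hsum_erase : ∑ ξ ∈ Finset.univ.erase 0, nsqY ξ = n * YC - YC^2 := by
        rw [Finset.sum_erase_eq_sub (Finset.mem_univ 0), hparseval, hnsqY0]
      calc ∑ ξ ∈ Finset.univ.erase 0, nsqY ξ * Sr ξ
          ≤ ∑ ξ ∈ Finset.univ.erase 0, nsqY ξ * ((1/4) * (K:ℝ)^2 * M) := by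
            refine Finset.sum_le_sum fun ξ hξ => ?_
            have hξne : ξ ≠ 0 := (Finset.mem_erase.1 hξ).1
            exact mul_le_mul_of_nonneg_left (hSbound ξ hξne) (hnsqYnonneg ξ)
        _ = (n * YC - YC^2) * ((1/4) * (K:ℝ)^2 * M) := by
            rw [← Finset.sum_mul, hsum_erase]
        _ = (1/4) * (K:ℝ)^2 * M * (n * YC - YC^2) := by ring
    linarith
  -- final contradiction
  have hYCn : YC ≤ n / 2 := hYhalf
  have hnT : n * ((M:ℝ) * ((K:ℝ)^2*YC - 2*(K:ℝ)^3*e0*YC)) ≤ n * T :=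
    mul_le_mul_of_nonneg_left hlow hn0.le
  have hKe0 : 2 * (K:ℝ) * e0 ≤ 5/32 := by
    rw [he0def]
    have h1 : 2 * (K:ℝ) * (W/(16*(p:ℝ))) = (K:ℝ) * W / (8 * (p:ℝ)) := by
      field_simp
      ring
    rw [h1]
    rw [div_le_iff₀ (by linarith : (0:ℝ) < 8*(p:ℝ))]
    have h2 : (K:ℝ) * W ≤ ((p:ℝ)/W + 1) * W := by
      exact mul_le_mul_of_nonneg_right hKub hW0.le
    have h3 : ((p:ℝ)/W + 1) * W = (p:ℝ) + W := by
      field_simp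
    nlinarith [hWp4, hpR]
  have hfinal : (1:ℝ) - 2*(K:ℝ)*e0 ≤ 5/8 := by
    have hQ : (0:ℝ) < n * (M:ℝ) * (K:ℝ)^2 * YC := by positivity
    have hlhs : n * ((M:ℝ) * ((K:ℝ)^2*YC - 2*(K:ℝ)^3*e0*YC))
        = (n * (M:ℝ) * (K:ℝ)^2 * YC) * (1 - 2*(K:ℝ)*e0) := by ring
    have hrhs : YC^2 * ((K:ℝ)^2 * M) + (1/4) * (K:ℝ)^2 * M * (n * YC - YC^2)
        ≤ (n * (M:ℝ) * (K:ℝ)^2 * YC) * (5/8) := by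
      have hYC2 : YC^2 ≤ (n/2) * YC := by nlinarith [hYC0, hYCn]
      have hr1 : YC^2 * ((K:ℝ)^2 * M) + (1/4) * (K:ℝ)^2 * M * (n * YC - YC^2)
          = (K:ℝ)^2 * M * ((3/4) * YC^2 + (1/4) * n * YC) := by ring
      rw [hr1]
      have hr2 : (3/4) * YC^2 + (1/4) * n * YC ≤ (3/4) * ((n/2) * YC) + (1/4) * n * YC := by
        nlinarith [hYC2]
      calc (K:ℝ)^2 * M * ((3/4) * YC^2 + (1/4) * n * YC)
          ≤ (K:ℝ)^2 * M * ((3/4) * ((n/2) * YC) + (1/4) * n * YC) := by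
            refine mul_le_mul_of_nonneg_left hr2 ?_
            positivity
        _ = (n * (M:ℝ) * (K:ℝ)^2 * YC) * (5/8) := by ring
    have hchain : (n * (M:ℝ) * (K:ℝ)^2 * YC) * (1 - 2*(K:ℝ)*e0)
        ≤ (n * (M:ℝ) * (K:ℝ)^2 * YC) * (5/8) := by
      rw [← hlhs]
      exact le_trans hnT (le_trans hupper hrhs)
    exact le_of_mul_le_mul_left hchain hQ
  linarith [hKe0, hfinal]

-- === final wrapper ===

private def flin (ξ : Fin d → ZMod p) : (Fin d → ZMod p) →ₗ[ZMod p] ZMod p where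
  toFun x := ∑ i, ξ i * x i
  map_add' x y := by
    simp only [Pi.add_apply, mul_add]
    rw [Finset.sum_add_distrib]
  map_smul' r x := by
    simp only [Pi.smul_apply, smul_eq_mul, RingHom.id_apply]
    rw [Finset.mul_sum]
    exact Finset.sum_congr rfl fun i _ => by ring

private lemma flin_ne {ξ : Fin d → ZMod p} (hξ : ξ ≠ 0) : flin ξ ≠ 0 := by
  obtain ⟨i, hi⟩ := Function.ne_iff.1 hξ
  have hxi : ξ i ≠ 0 := by simpa using hi
  intro h0
  have h1 : flin ξ (Pi.single i 1) = 0 := by rw [h0]; rfl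
  have h2 : flin ξ (Pi.single i 1) = ξ i := by
    have hrfl : flin ξ (Pi.single i 1)
        = ∑ j, ξ j * (Pi.single i (1 : ZMod p) : Fin d → ZMod p) j := rfl
    rw [hrfl, Finset.sum_eq_single i]
    · rw [Pi.single_eq_same, mul_one]
    · intro j _ hj
      rw [Pi.single_eq_of_ne hj, mul_zero]
    · intro h
      exact absurd (Finset.mem_univ i) h
  exact hxi (h2 ▸ h1)

theorem alon_dubiner_expansion_cor {p d : ℕ} (hp : p.Prime) (W : ℝ) (hW : 1 ≤ W)
    (A : Multiset (Fin d → ZMod p))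
    (hhyp : ∀ (f : (Fin d → ZMod p) →ₗ[ZMod p] ZMod p) (c : ZMod p), f ≠ 0 →
      ((A.filter (fun x => f x = c)).card : ℝ) ≤ (Multiset.card A : ℝ) / (4 * W)) :
    ∀ Y : Finset (Fin d → ZMod p), (Y.card : ℝ) ≤ (p : ℝ) ^ d / 2 →
      ∀ a' ∈ A, ∃ a ∈ A,
        (W / (16 * p)) * (Y.card : ℝ) ≤
          (((Y.image (a + ·)) \ (Y.image (a' + ·))).card : ℝ) := by
  haveI : Fact p.Prime := ⟨hp⟩
  intro Y hY a' ha'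
  rcases Y.eq_empty_or_nonempty with hYe | hYne
  · refine ⟨a', ha', ?_⟩
    subst hYe
    simp
  · have hd : 1 ≤ d := by
      by_contra hcon
      push_neg at hcon
      interval_cases d
      have h1 : (1:ℝ) ≤ Y.card := by
        have h := Finset.card_pos.2 hYne
        exact_mod_cast Nat.one_le_iff_ne_zero.2 h.ne'
      rw [pow_zero] at hY
      linarith
    set B := A.map (fun x => x - a') with hB
    have hA0 : A ≠ 0 := by
      intro h
      rw [h] at ha'
      exact absurd ha' (Multiset.notMem_zero a')
    have hBne : B ≠ 0 := by
      rw [hB]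
      intro h
      exact hA0 (Multiset.map_eq_zero.1 h)
    have hcardBA : Multiset.card B = Multiset.card A := by
      rw [hB, Multiset.card_map]
    have hfib : ∀ ξ : Fin d → ZMod p, ξ ≠ 0 → ∀ c : ZMod p,
        ((Multiset.card (B.filter (fun x => (∑ i, ξ i * x i) = c)) : ℝ))
          ≤ (Multiset.card B : ℝ) / (4*W) := by
      intro ξ hξ c
      have h := hhyp (flin ξ) (c + ∑ i, ξ i * a' i) (flin_ne hξ)
      have hcount : Multiset.card (B.filter (fun x => (∑ i, ξ i * x i) = c))
          = Multiset.card (A.filter (fun x => flin ξ x = c + ∑ i, ξ i * a' i)) := by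
        rw [hB, Multiset.filter_map, Multiset.card_map]
        congr 1
        apply Multiset.filter_congr
        intro a _
        show (∑ i, ξ i * (a - a') i) = c ↔ flin ξ a = c + ∑ i, ξ i * a' i
        have hsum : (∑ i, ξ i * (a - a') i) = (∑ i, ξ i * a i) - ∑ i, ξ i * a' i := by
          rw [← Finset.sum_sub_distrib]
          exact Finset.sum_congr rfl fun i _ => by
            rw [Pi.sub_apply, mul_sub]
        rw [hsum]
        show (∑ i, ξ i * a i) - (∑ i, ξ i * a' i) = c ↔ (∑ i, ξ i * a i) = c + ∑ i, ξ i * a' i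
        constructor
        · intro hh
          rw [← hh]
          ring
        · intro hh
          rw [hh]
          ring
      rw [hcount, hcardBA]
      exact h
    obtain ⟨b, hbB, hineq⟩ := key hd W hW B hBne hfib Y hYne hY
    obtain ⟨a, haA, rfl⟩ := Multiset.mem_map.1 hbB
    refine ⟨a, haA, ?_⟩
    have hcards : ((Y.image (a + ·)) \ (Y.image (a' + ·))).card = fv Y (a - a') := by
      have h1 : trs a' (trs (a - a') Y \ Y) = (Y.image (a + ·)) \ (Y.image (a' + ·)) := by
        rw [trs_sdiff, trs_trs]
        have : a' + (a - a') = a := by abel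
        rw [this]
        rfl
      have h2 : (trs a' (trs (a - a') Y \ Y)).card = (trs (a - a') Y \ Y).card :=
        Finset.card_image_of_injective _ (add_right_injective a')
      rw [← h1, h2, fv]
    rw [hcards]
    exact hineq
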